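/- Let (M, d) be a metric space, let x, y ∈ M with x ≠ y, and let γ : [0,1] → M be a continuous path from x to y. Then there exists an injective continuous path η : [0,1] → M from x to y with η([0,1]) ⊆ γ([0,1]) and ℓ(η) ≤ ℓ(γ), where ℓ denotes the length of a path (the supremum of sums Σ d(γ(t_k), γ(t_{k-1})) over all finite partitions of the domain). -/

import Mathlib

open Set MeasureTheory ENNReal

section Defs

variable {M : Type*} [MetricSpace M]

/-- `γ` is a path in `E` from `x` to `y` parametrized on `[a,b]`. -/
def IsPathIn (E : Set M) (γ : ℝ → M) (a b : ℝ) (x y : M) : Prop :=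
  a ≤ b ∧ ContinuousOn γ (Set.Icc a b) ∧ γ a = x ∧ γ b = y ∧ ∀ t ∈ Set.Icc a b, γ t ∈ E

/-- Length of a path: total variation over `[a,b]`. -/
noncomputable def pathLength (γ : ℝ → M) (a b : ℝ) : ℝ≥0∞ := eVariationOn γ (Set.Icc a b)

/-- Intrinsic metric on `E`: infimum of lengths of finite-length paths in `E`. -/
noncomputable def intrinsicDist (E : Set M) (x y : M) : ℝ≥0∞ :=
  sInf { L | ∃ γ a b, IsPathIn E γ a b x y ∧ pathLength γ a b < ⊤ ∧ pathLength γ a b = L }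

/-- `Θ`-intrinsic metric relative to ambient set `N`: only paths whose intersection with `Θ`
has countable closure (closure taken in the subspace `N`) are allowed. -/
noncomputable def thetaDistIn (N Θ : Set M) (x y : M) : ℝ≥0∞ :=
  sInf { L | ∃ γ a b, IsPathIn N γ a b x y ∧ pathLength γ a b < ⊤ ∧
    (closure (γ '' Set.Icc a b ∩ Θ) ∩ N).Countable ∧ pathLength γ a b = L }

/-- `Θ`-finite intrinsic metric relative to ambient set `N`: only paths meeting `Θ` in finitely
many points are allowed. -/
noncomputable def thetaFinDistIn (N Θ : Set M) (x y : M) : ℝ≥0∞ :=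
  sInf { L | ∃ γ a b, IsPathIn N γ a b x y ∧ pathLength γ a b < ⊤ ∧
    (γ '' Set.Icc a b ∩ Θ).Finite ∧ pathLength γ a b = L }

/-- `Θ` is permeable relative to `N`. -/
def PermeableIn (N Θ : Set M) : Prop :=
  ∀ x ∈ N, ∀ y ∈ N, thetaDistIn N Θ x y = intrinsicDist N x y

/-- `Θ` is finitely permeable relative to `N`. -/
def FinitelyPermeableIn (N Θ : Set M) : Prop :=
  ∀ x ∈ N, ∀ y ∈ N, thetaFinDistIn N Θ x y = intrinsicDist N x y

/-- `Θ` is permeable (relative to the whole space). -/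
def Permeable (Θ : Set M) : Prop := PermeableIn Set.univ Θ

/-- `Θ` is finitely permeable (relative to the whole space). -/
def FinitelyPermeable (Θ : Set M) : Prop := FinitelyPermeableIn Set.univ Θ

end Defs

set_option linter.unusedSectionVars false
set_option linter.unusedVariables false
set_option maxHeartbeats 1000000

namespace Stmt1Arc

section ArcAux
variable {M : Type*} [MetricSpace M]

/-- Admissible closed sets for the loop-erasure Zorn argument. -/
def KSet (γ : ℝ → M) : Set (Set ℝ) :=
  {K | IsClosed K ∧ K ⊆ Icc 0 1 ∧ (0:ℝ) ∈ K ∧ (1:ℝ) ∈ K ∧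
    ∀ a ∈ K, ∀ b ∈ K, a < b → K ∩ Ioo a b = ∅ → γ a = γ b}

lemma sInter_mem_KSet (γ : ℝ → M) (hγ : ContinuousOn γ (Icc 0 1))
    {c : Set (Set ℝ)} (hcS : c ⊆ KSet γ) (hchain : IsChain (· ⊆ ·) c)
    (hcne : c.Nonempty) : ⋂₀ c ∈ KSet γ := by
  obtain ⟨K₀, hK₀⟩ := hcne
  have hK₀' := hcS hK₀
  refine ⟨isClosed_sInter fun K hK => (hcS hK).1, (sInter_subset_of_mem hK₀).trans hK₀'.2.1,
    fun K hK => (hcS hK).2.2.1, fun K hK => (hcS hK).2.2.2.1, ?_⟩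
  intro a ha b hb hab hgap
  have haI : a ∈ Icc (0:ℝ) 1 := hK₀'.2.1 (ha K₀ hK₀)
  have hbI : b ∈ Icc (0:ℝ) 1 := hK₀'.2.1 (hb K₀ hK₀)
  -- key step : for every small δ, find a'∈[a,a+δ], b'∈[b-δ,b] with γ a' = γ b'
  have key : ∀ δ : ℝ, 0 < δ → δ < (b - a)/2 →
      ∃ a' b', γ a' = γ b' ∧ a' ∈ Icc a (a+δ) ∧ b' ∈ Icc (b-δ) b := by
    intro δ hδ0 hδ
    -- find K ∈ c with K ∩ Icc (a+δ) (b-δ) = ∅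
    have hsub : Icc (a+δ) (b-δ) ⊆ Ioo a b := fun t ht =>
      ⟨lt_of_lt_of_le (by linarith) ht.1, lt_of_le_of_lt ht.2 (by linarith)⟩
    have hemp : (⋂ K : c, ((K : Set ℝ) ∩ Icc (a+δ) (b-δ))) = ∅ := by
      rw [eq_empty_iff_forall_notMem]
      intro t ht
      simp only [mem_iInter, mem_inter_iff] at ht
      have htc : t ∈ ⋂₀ c := fun K hK => (ht ⟨K, hK⟩).1
      have : t ∈ ⋂₀ c ∩ Ioo a b := ⟨htc, hsub (ht ⟨K₀, hK₀⟩).2⟩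
      rw [hgap] at this
      exact this
    haveI : Nonempty c := ⟨⟨K₀, hK₀⟩⟩
    have hdir : Directed (· ⊇ ·) (fun K : c => ((K : Set ℝ) ∩ Icc (a+δ) (b-δ))) := by
      intro K L
      rcases hchain.total K.2 L.2 with h | h
      · exact ⟨K, le_refl _, inter_subset_inter_left _ h⟩
      · exact ⟨L, inter_subset_inter_left _ h, le_refl _⟩
    have : ∃ K : c, ((K : Set ℝ) ∩ Icc (a+δ) (b-δ)) = ∅ := by
      by_contra hne
      push_neg at hne
      have := IsCompact.nonempty_iInter_of_directed_nonempty_isCompact_isClosed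
        (fun K : c => ((K : Set ℝ) ∩ Icc (a+δ) (b-δ))) hdir
        (fun K => hne K)
        (fun K => (isCompact_Icc.inter_left ((hcS K.2).1)))
        (fun K => ((hcS K.2).1.inter isClosed_Icc))
      rw [hemp] at this
      exact this.ne_empty rfl
    obtain ⟨⟨K, hKc⟩, hKemp⟩ := this
    have hK := hcS hKc
    have haK : a ∈ K := ha K hKc
    have hbK : b ∈ K := hb K hKc
    set m := (a+b)/2 with hm
    -- a' = sup of K ∩ [a, m]
    have hAne : (K ∩ Icc a m).Nonempty := ⟨a, haK, le_refl a, by simp [hm]; linarith⟩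
    have hAcl : IsClosed (K ∩ Icc a m) := hK.1.inter isClosed_Icc
    have hAbdd : BddAbove (K ∩ Icc a m) := ⟨m, fun t ht => ht.2.2⟩
    set a' := sSup (K ∩ Icc a m) with ha'
    have ha'mem : a' ∈ K ∩ Icc a m := hAcl.csSup_mem hAne hAbdd
    have hfree : ∀ t ∈ K, t ∉ Icc (a+δ) (b-δ) := by
      intro t ht hmem
      have : t ∈ (K : Set ℝ) ∩ Icc (a+δ) (b-δ) := ⟨ht, hmem⟩
      rw [hKemp] at this; exact this
    have ha'le : a' ≤ a + δ := by
      by_contra h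
      push_neg at h
      exact hfree a' ha'mem.1 ⟨le_of_lt h, ha'mem.2.2.trans (by simp [hm]; linarith)⟩
    -- b' = inf of K ∩ [m, b]
    have hBne : (K ∩ Icc m b).Nonempty := ⟨b, hbK, by simp [hm]; linarith, le_refl b⟩
    have hBcl : IsClosed (K ∩ Icc m b) := hK.1.inter isClosed_Icc
    have hBbdd : BddBelow (K ∩ Icc m b) := ⟨m, fun t ht => ht.2.1⟩
    set b' := sInf (K ∩ Icc m b) with hb'
    have hb'mem : b' ∈ K ∩ Icc m b := hBcl.csInf_mem hBne hBbdd
    have hb'ge : b - δ ≤ b' := by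
      by_contra h
      push_neg at h
      exact hfree b' hb'mem.1 ⟨le_trans (by simp [hm]; linarith) hb'mem.2.1, le_of_lt h⟩
    have ha'b' : a' < b' := lt_of_le_of_lt ha'le (lt_of_lt_of_le (by linarith) hb'ge)
    have hgap' : K ∩ Ioo a' b' = ∅ := by
      rw [eq_empty_iff_forall_notMem]
      rintro t ⟨htK, ht1, ht2⟩
      rcases le_or_gt t m with h | h
      · have : t ∈ K ∩ Icc a m := ⟨htK, le_trans ha'mem.2.1 (le_of_lt ht1), h⟩
        exact absurd (le_csSup hAbdd this) (not_le.2 ht1)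
      · have : t ∈ K ∩ Icc m b := ⟨htK, le_of_lt h, le_trans (le_of_lt ht2) hb'mem.2.2⟩
        exact absurd (csInf_le hBbdd this) (not_le.2 ht2)
    exact ⟨a', b', hK.2.2.2.2 a' ha'mem.1 b' hb'mem.1 ha'b' hgap',
      ⟨ha'mem.2.1, ha'le⟩, ⟨hb'ge, hb'mem.2.2⟩⟩
  -- now take δ → 0
  set δseq : ℕ → ℝ := fun n => (b-a)/(4*(n+1)) with hδseq
  have hδpos : ∀ n, 0 < δseq n := fun n => by
    apply div_pos (by linarith) (by positivity)
  have hδlt : ∀ n, δseq n < (b-a)/2 := by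
    intro n
    rw [hδseq]
    apply div_lt_div_of_pos_left (by linarith) (by norm_num) ?_
    have : (1:ℝ) ≤ n + 1 := by exact_mod_cast Nat.succ_le_succ (Nat.zero_le n)
    linarith
  choose a' b' hγab ha' hb' using fun n => key (δseq n) (hδpos n) (hδlt n)
  have hδ0 : Filter.Tendsto δseq Filter.atTop (nhds 0) := by
    rw [hδseq]
    simp only [div_eq_mul_inv]
    rw [show (0:ℝ) = (b-a) * 0 by ring]
    apply Filter.Tendsto.const_mul
    apply Filter.Tendsto.inv_tendsto_atTop
    apply Filter.tendsto_atTop_mono (fun n => by push_cast; linarith : ∀ n : ℕ, (n:ℝ) ≤ 4*(n+1))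
    exact tendsto_natCast_atTop_atTop
  have hta : Filter.Tendsto a' Filter.atTop (nhds a) := by
    have h1 : Filter.Tendsto (fun n => a + δseq n) Filter.atTop (nhds a) := by
      simpa using (tendsto_const_nhds (x := a)).add hδ0
    exact tendsto_of_tendsto_of_tendsto_of_le_of_le tendsto_const_nhds h1
      (fun n => (ha' n).1) (fun n => (ha' n).2)
  have htb : Filter.Tendsto b' Filter.atTop (nhds b) := by
    have h1 : Filter.Tendsto (fun n => b - δseq n) Filter.atTop (nhds b) := by
      simpa using (tendsto_const_nhds (x := b)).sub hδ0
    exact tendsto_of_tendsto_of_tendsto_of_le_of_le h1 tendsto_const_nhds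
      (fun n => (hb' n).1) (fun n => (hb' n).2)
  -- a'ₙ, b'ₙ ∈ Icc 0 1
  have haI' : ∀ n, a' n ∈ Icc (0:ℝ) 1 := fun n =>
    ⟨le_trans haI.1 (ha' n).1, le_trans (le_trans (ha' n).2 (by have := hδlt n; linarith)) hbI.2⟩
  have hbI' : ∀ n, b' n ∈ Icc (0:ℝ) 1 := fun n =>
    ⟨le_trans haI.1 (le_trans (by have := hδlt n; have := hδpos n; linarith) (hb' n).1),
      le_trans (hb' n).2 hbI.2⟩
  have hga : Filter.Tendsto (fun n => γ (a' n)) Filter.atTop (nhds (γ a)) := by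
    apply (hγ a haI).tendsto.comp
    rw [tendsto_nhdsWithin_iff]
    exact ⟨hta, Filter.Eventually.of_forall haI'⟩
  have hgb : Filter.Tendsto (fun n => γ (b' n)) Filter.atTop (nhds (γ b)) := by
    apply (hγ b hbI).tendsto.comp
    rw [tendsto_nhdsWithin_iff]
    exact ⟨htb, Filter.Eventually.of_forall hbI'⟩
  have : Filter.Tendsto (fun n => γ (a' n)) Filter.atTop (nhds (γ b)) := by
    simpa only [hγab] using hgb
  exact tendsto_nhds_unique hga this

end ArcAux

section ArcAux2
variable {M : Type*} [MetricSpace M]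


lemma Icc_mem_KSet (γ : ℝ → M) : Icc 0 1 ∈ KSet γ := by
  refine ⟨isClosed_Icc, le_refl _, ⟨le_refl _, zero_le_one⟩, ⟨zero_le_one, le_refl _⟩, ?_⟩
  intro a ha b hb hab hgap
  exfalso
  have : (a+b)/2 ∈ Icc (0:ℝ) 1 ∩ Ioo a b :=
    ⟨⟨by linarith [ha.1], by linarith [hb.2]⟩, by constructor <;> linarith⟩
  rw [hgap] at this; exact this

lemma exists_minimal_KSet (γ : ℝ → M) (hγ : ContinuousOn γ (Icc 0 1)) :
    ∃ K ∈ KSet γ, ∀ K' ∈ KSet γ, K' ⊆ K → K' = K := by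
  obtain ⟨m, hm⟩ := zorn_superset (KSet γ) (fun c hcS hchain => by
    rcases c.eq_empty_or_nonempty with rfl | hcne
    · exact ⟨Icc 0 1, Icc_mem_KSet γ, fun s hs => absurd hs (notMem_empty s)⟩
    · exact ⟨⋂₀ c, sInter_mem_KSet γ hγ hcS hchain hcne, fun s hs => sInter_subset_of_mem hs⟩)
  exact ⟨m, hm.prop, fun K' hK' hsub => (hm.eq_of_le hK' hsub).symm.symm⟩

/-- On a minimal K, γ identifies only gap endpoints. -/
lemma minimal_inj (γ : ℝ → M) {K : Set ℝ} (hK : K ∈ KSet γ)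
    (hmin : ∀ K' ∈ KSet γ, K' ⊆ K → K' = K)
    {s t : ℝ} (hs : s ∈ K) (ht : t ∈ K) (hst : s < t) (hγst : γ s = γ t) :
    K ∩ Ioo s t = ∅ := by
  obtain ⟨hKcl, hKI, h0K, h1K, hgapK⟩ := hK
  have hs0 : (0:ℝ) ≤ s := (hKI hs).1
  have ht1 : t ≤ 1 := (hKI ht).2
  set K' := K \ Ioo s t with hK'
  have hK'mem : K' ∈ KSet γ := by
    refine ⟨hKcl.sdiff isOpen_Ioo, (diff_subset).trans hKI,
      ⟨h0K, fun h => absurd h.1 (not_lt.2 hs0)⟩,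
      ⟨h1K, fun h => absurd h.2 (not_lt.2 ht1)⟩, ?_⟩
    intro a ha b hb hab hgap
    -- K ∩ Ioo a b ⊆ Ioo s t
    have hsub : K ∩ Ioo a b ⊆ Ioo s t := by
      intro u hu
      by_contra hu'
      have : u ∈ K' ∩ Ioo a b := ⟨⟨hu.1, hu'⟩, hu.2⟩
      rw [hgap] at this; exact this
    rcases eq_or_ne (K ∩ Ioo a b) ∅ with hemp | hne
    · exact hgapK a ha.1 b hb.1 hab hemp
    · obtain ⟨u, hu⟩ := nonempty_iff_ne_empty.2 hne
      have hust : u ∈ Ioo s t := hsub hu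
      have has : a ≤ s := by
        rcases le_or_gt a s with h | h
        · exact h
        · exfalso
          rcases ha.2 ⟨h, lt_trans hu.2.1 hust.2⟩
      have htb : t ≤ b := by
        rcases le_or_gt t b with h | h
        · exact h
        · exfalso
          rcases hb.2 ⟨lt_trans hust.1 hu.2.2, h⟩
      have hγas : γ a = γ s := by
        rcases eq_or_lt_of_le has with rfl | h
        · rfl
        · apply hgapK a ha.1 s hs h
          rw [eq_empty_iff_forall_notMem]
          rintro v ⟨hvK, hv1, hv2⟩
          have : v ∈ Ioo s t := hsub ⟨hvK, hv1, lt_of_lt_of_le (hv2.trans hst) htb⟩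
          exact absurd this.1 (not_lt.2 (le_of_lt hv2))
      have hγtb : γ t = γ b := by
        rcases eq_or_lt_of_le htb with rfl | h
        · rfl
        · apply hgapK t ht b hb.1 h
          rw [eq_empty_iff_forall_notMem]
          rintro v ⟨hvK, hv1, hv2⟩
          have : v ∈ Ioo s t := hsub ⟨hvK, lt_of_le_of_lt (has.trans hst.le) hv1, hv2⟩
          exact absurd this.2 (not_lt.2 (le_of_lt hv1))
      rw [hγas, hγst, hγtb]
  have := hmin K' hK'mem diff_subset
  rw [eq_empty_iff_forall_notMem]
  rintro u ⟨huK, huI⟩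
  rw [← this] at huK
  exact huK.2 huI

end ArcAux2
section ArcAux3
variable {M : Type*} [MetricSpace M]

noncomputable def rK (K : Set ℝ) (t : ℝ) : ℝ := sSup (K ∩ Icc 0 t)

variable {γ : ℝ → M} {K : Set ℝ}
  (hKcl : IsClosed K) (hKI : K ⊆ Icc 0 1) (h0K : (0:ℝ) ∈ K) (h1K : (1:ℝ) ∈ K)

section
include hKcl hKI h0K

lemma rK_bddAbove (t : ℝ) : BddAbove (K ∩ Icc 0 t) := ⟨1, fun u hu => (hKI hu.1).2⟩

lemma rK_mem_of_nonneg {t : ℝ} (ht : 0 ≤ t) : rK K t ∈ K ∩ Icc 0 t :=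
  (hKcl.inter isClosed_Icc).csSup_mem ⟨0, h0K, le_refl 0, ht⟩ (rK_bddAbove hKcl hKI h0K t)

lemma rK_of_neg {t : ℝ} (ht : t < 0) : rK K t = 0 := by
  have : K ∩ Icc 0 t = ∅ := by
    rw [eq_empty_iff_forall_notMem]; rintro u ⟨_, h0, h1⟩; linarith
  rw [rK, this, Real.sSup_empty]

lemma rK_mem_K (t : ℝ) : rK K t ∈ K := by
  rcases lt_or_ge t 0 with h | h
  · rw [rK_of_neg hKcl hKI h0K h]; exact h0K
  · exact (rK_mem_of_nonneg hKcl hKI h0K h).1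

lemma rK_nonneg (t : ℝ) : 0 ≤ rK K t := (hKI (rK_mem_K hKcl hKI h0K t)).1

lemma rK_le_one (t : ℝ) : rK K t ≤ 1 := (hKI (rK_mem_K hKcl hKI h0K t)).2

lemma rK_le_of_nonneg {t : ℝ} (ht : 0 ≤ t) : rK K t ≤ t :=
  (rK_mem_of_nonneg hKcl hKI h0K ht).2.2

lemma rK_mono : Monotone (rK K) := by
  intro u v huv
  rcases lt_or_ge u 0 with h | h
  · rw [rK_of_neg hKcl hKI h0K h]; exact rK_nonneg hKcl hKI h0K v
  · exact csSup_le_csSup (rK_bddAbove hKcl hKI h0K v)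
      ⟨0, h0K, le_refl 0, h⟩ (inter_subset_inter_right _ (Icc_subset_Icc_right huv))

lemma le_rK {u t : ℝ} (hu : u ∈ K) (hut : u ≤ t) : u ≤ rK K t :=
  le_csSup (rK_bddAbove hKcl hKI h0K t) ⟨hu, (hKI hu).1, hut⟩

lemma rK_of_mem {t : ℝ} (ht : t ∈ K) : rK K t = t :=
  le_antisymm (rK_le_of_nonneg hKcl hKI h0K (hKI ht).1) (le_rK hKcl hKI h0K ht (le_refl t))

lemma rK_eq_of_gap {u v : ℝ} (huv : v ≤ u) (hgap : K ∩ Ioc v u = ∅) :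
    rK K u = rK K v := by
  have : K ∩ Icc 0 u = K ∩ Icc 0 v := by
    apply Subset.antisymm
    · rintro w ⟨hwK, hw0, hwu⟩
      refine ⟨hwK, hw0, ?_⟩
      by_contra h
      push_neg at h
      have : w ∈ K ∩ Ioc v u := ⟨hwK, h, hwu⟩
      rw [hgap] at this; exact this
    · exact inter_subset_inter_right _ (Icc_subset_Icc_right huv)
  rw [rK, rK, this]

end

section
variable (hgapK : ∀ a ∈ K, ∀ b ∈ K, a < b → K ∩ Ioo a b = ∅ → γ a = γ b)
include hKcl hKI h0K h1K hgapK

/-- `γ (rK K v)` equals `γ` at the first K-point in `[max v 0, 1]`. -/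
lemma gamma_rK_eq_gamma_inf {v : ℝ} (hv : v < 1) :
    γ (rK K v) = γ (sInf (K ∩ Icc v 1)) ∧
      sInf (K ∩ Icc v 1) ∈ K ∧ v ≤ sInf (K ∩ Icc v 1) ∧
      ∀ w ∈ K, v < w → sInf (K ∩ Icc v 1) ≤ w := by
  have hne : (K ∩ Icc v 1).Nonempty := ⟨1, h1K, le_of_lt hv, le_refl 1⟩
  have hbdd : BddBelow (K ∩ Icc v 1) := ⟨v, fun w hw => hw.2.1⟩
  have hmem : sInf (K ∩ Icc v 1) ∈ K ∩ Icc v 1 :=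
    (hKcl.inter isClosed_Icc).csInf_mem hne hbdd
  set k' := sInf (K ∩ Icc v 1) with hk'
  have hle : ∀ w ∈ K, v < w → k' ≤ w := by
    intro w hw hvw
    exact csInf_le hbdd ⟨hw, le_of_lt hvw, (hKI hw).2⟩
  have hrle : rK K v ≤ k' := by
    rcases lt_or_ge v 0 with h | h
    · rw [rK_of_neg hKcl hKI h0K h]; exact (hKI hmem.1).1
    · calc rK K v ≤ v := rK_le_of_nonneg hKcl hKI h0K h
        _ ≤ k' := hmem.2.1
  rcases eq_or_lt_of_le hrle with heq | hlt
  · exact ⟨by rw [heq], hmem.1, hmem.2.1, hle⟩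
  · refine ⟨hgapK _ (rK_mem_K hKcl hKI h0K v) _ hmem.1 hlt ?_, hmem.1, hmem.2.1, hle⟩
    rw [eq_empty_iff_forall_notMem]
    rintro w ⟨hwK, hw1, hw2⟩
    rcases le_or_gt w v with h | h
    · exact absurd (le_rK hKcl hKI h0K hwK h) (not_le.2 hw1)
    · exact absurd (hle w hwK h) (not_le.2 hw2)

/-- Uniform-continuity transfer: the modulus of `γ` on `[0,1]` works for `γ ∘ rK K`. -/
lemma eta_dist_le {ε δ : ℝ}
    (hδ : ∀ p ∈ Icc (0:ℝ) 1, ∀ q ∈ Icc (0:ℝ) 1, |p - q| ≤ δ → dist (γ p) (γ q) ≤ ε)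
    {u v : ℝ} (hvu : v ≤ u) (huv : u - v ≤ δ) :
    dist (γ (rK K u)) (γ (rK K v)) ≤ ε := by
  have hδ0 : 0 ≤ δ := le_trans (by linarith) huv
  rcases eq_empty_or_nonempty (K ∩ Ioc v u) with hemp | ⟨k, hkK, hkv, hku⟩
  · rw [rK_eq_of_gap hKcl hKI h0K hvu hemp, dist_self]
    have h00 := hδ 0 ⟨le_refl 0, zero_le_one⟩ 0 ⟨le_refl 0, zero_le_one⟩ (by simp [hδ0])
    rwa [dist_self] at h00
  · have hv1 : v < 1 := lt_of_lt_of_le hkv (hKI hkK).2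
    obtain ⟨hγeq, hk'K, hk'v, hk'le⟩ := gamma_rK_eq_gamma_inf hKcl hKI h0K h1K hgapK hv1
    set k' := sInf (K ∩ Icc v 1) with hk'
    have hk'k : k' ≤ k := hk'le k hkK hkv
    have hruk : k ≤ rK K u := le_rK hKcl hKI h0K hkK hku
    have hruu : rK K u ≤ u := rK_le_of_nonneg hKcl hKI h0K (le_trans (hKI hkK).1 hku)
    rw [hγeq]
    apply hδ _ ⟨rK_nonneg hKcl hKI h0K u, rK_le_one hKcl hKI h0K u⟩
      _ ⟨(hKI hk'K).1, (hKI hk'K).2⟩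
    rw [abs_le]
    constructor
    · linarith
    · linarith [le_trans hk'k hku, hk'v]

lemma eta_continuous (hγ : ContinuousOn γ (Icc 0 1)) :
    Continuous (fun t => γ (rK K t)) := by
  rw [Metric.continuous_iff]
  intro b ε hε
  have huc : UniformContinuousOn γ (Icc 0 1) :=
    isCompact_Icc.uniformContinuousOn_of_continuous hγ
  rw [Metric.uniformContinuousOn_iff] at huc
  obtain ⟨δ, hδ0, hδ⟩ := huc (ε/2) (by linarith)
  refine ⟨δ/2, by linarith, fun a hab => ?_⟩
  have hmod : ∀ p ∈ Icc (0:ℝ) 1, ∀ q ∈ Icc (0:ℝ) 1, |p - q| ≤ δ/2 → dist (γ p) (γ q) ≤ ε/2 := by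
    intro p hp q hq hpq
    exact le_of_lt (hδ p hp q hq (by rw [Real.dist_eq]; linarith))
  have : dist (γ (rK K a)) (γ (rK K b)) ≤ ε/2 := by
    rcases le_total b a with h | h
    · apply eta_dist_le hKcl hKI h0K h1K hgapK hmod h
      rw [Real.dist_eq, abs_lt] at hab; linarith
    · rw [dist_comm]
      apply eta_dist_le hKcl hKI h0K h1K hgapK hmod h
      rw [Real.dist_eq, abs_lt] at hab; linarith
  linarith

/-- Structure: if `γ∘rK` takes equal values at `a ≤ b`, it is constant on `[a,b]`. -/
lemma eta_const_of_eq
    (hinj : ∀ s ∈ K, ∀ t ∈ K, s < t → γ s = γ t → K ∩ Ioo s t = ∅)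
    {a b : ℝ} (hab : a ≤ b) (heq : γ (rK K a) = γ (rK K b)) :
    ∀ t ∈ Icc a b, γ (rK K t) = γ (rK K a) := by
  intro t ht
  have hra : rK K a ≤ rK K t := rK_mono hKcl hKI h0K ht.1
  have hrb : rK K t ≤ rK K b := rK_mono hKcl hKI h0K ht.2
  rcases eq_or_lt_of_le (hra.trans hrb) with heq2 | hlt
  · have : rK K t = rK K a := le_antisymm (heq2 ▸ hrb) hra
    rw [this]
  · have hgap := hinj _ (rK_mem_K hKcl hKI h0K a) _ (rK_mem_K hKcl hKI h0K b) hlt heq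
    have : rK K t ∉ Ioo (rK K a) (rK K b) := by
      intro h
      have : rK K t ∈ K ∩ Ioo (rK K a) (rK K b) := ⟨rK_mem_K hKcl hKI h0K t, h⟩
      rw [hgap] at this; exact this
    rcases eq_or_lt_of_le hra with h | h
    · rw [← h]
    · rcases eq_or_lt_of_le hrb with h' | h'
      · rw [h', ← heq]
      · exact absurd ⟨h, h'⟩ this

end
end ArcAux3

section ArcAux4
variable {M : Type*} [MetricSpace M]

noncomputable def gg (η : ℝ → M) (p q t : ℝ) : ℝ := Metric.diam (η '' Icc p (min q t))

noncomputable def sF (η : ℝ → M) (t : ℝ) : ℝ :=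
  ∑' n : ℕ, (1/2:ℝ)^n * gg η ((((Denumerable.eqv (ℚ × ℚ)).symm n).1 : ℚ) : ℝ)
    ((((Denumerable.eqv (ℚ × ℚ)).symm n).2 : ℚ) : ℝ) t

variable {η : ℝ → M} {C : Set M}
  (hC : IsCompact C) (hrange : ∀ t, η t ∈ C)
  (hηu : ∀ ε : ℝ, 0 < ε → ∃ δ > 0, ∀ a b : ℝ, |a - b| ≤ δ → dist (η a) (η b) ≤ ε)
  (hconst : ∀ a b : ℝ, a ≤ b → η a = η b → ∀ t ∈ Icc a b, η t = η a)
  (hneg : ∀ t ≤ (0:ℝ), η t = η 0)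

section
include hC hrange

lemma img_bounded (A : Set ℝ) : Bornology.IsBounded (η '' A) :=
  hC.isBounded.subset (by rintro _ ⟨t, _, rfl⟩; exact hrange t)

lemma gg_nonneg (p q t : ℝ) : 0 ≤ gg η p q t := Metric.diam_nonneg

lemma gg_le_diam (p q t : ℝ) : gg η p q t ≤ Metric.diam C :=
  Metric.diam_le_of_forall_dist_le Metric.diam_nonneg fun x hx y hy => by
    obtain ⟨a, _, rfl⟩ := hx; obtain ⟨b, _, rfl⟩ := hy
    exact Metric.dist_le_diam_of_mem hC.isBounded (hrange a) (hrange b)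

lemma gg_mono (p q : ℝ) {t t' : ℝ} (h : t ≤ t') : gg η p q t ≤ gg η p q t' :=
  Metric.diam_mono (image_mono (Icc_subset_Icc_right (min_le_min (le_refl q) h)))
    (img_bounded hC hrange _)

/-- constancy of η on [t1,t2] freezes gg -/
lemma gg_const {p q t1 t2 : ℝ} (h12 : t1 ≤ t2)
    (hc : ∀ u ∈ Icc t1 t2, η u = η t1) : gg η p q t1 = gg η p q t2 := by
  rcases lt_or_ge (min q t2) p with h | h
  · -- both empty
    have h1 : Icc p (min q t2) = ∅ := Icc_eq_empty (not_le.2 h)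
    have h2 : Icc p (min q t1) = ∅ :=
      Icc_eq_empty (not_le.2 (lt_of_le_of_lt (min_le_min (le_refl q) h12) h))
    rw [gg, gg, h1, h2]
  · rcases le_or_gt q t1 with hq | hq
    · have : min q t1 = min q t2 := by
        rw [min_eq_left hq, min_eq_left (hq.trans h12)]
      rw [gg, gg, this]
    · have hmin1 : min q t1 = t1 := min_eq_right (le_of_lt hq)
      rcases lt_or_ge t1 p with hp | hp
      · -- A empty, A' maps into {η t1}
        have h2 : Icc p (min q t1) = ∅ := Icc_eq_empty (by rw [hmin1]; exact not_le.2 hp)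
        have hsub : ∀ u ∈ Icc p (min q t2), η u = η t1 := fun u hu =>
          hc u ⟨le_of_lt (lt_of_lt_of_le hp hu.1), hu.2.trans (min_le_right _ _)⟩
        have : (η '' Icc p (min q t2)).Subsingleton := by
          rintro _ ⟨a, ha, rfl⟩ _ ⟨b, hb, rfl⟩
          rw [hsub a ha, hsub b hb]
        rw [gg, gg, h2]
        simp [Metric.diam_subsingleton this]
      · -- images are equal
        have himg : η '' Icc p (min q t2) = η '' Icc p (min q t1) := by
          apply Subset.antisymm
          · rintro _ ⟨u, hu, rfl⟩
            rcases le_or_gt u (min q t1) with h' | h'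
            · exact ⟨u, ⟨hu.1, h'⟩, rfl⟩
            · refine ⟨t1, ⟨hp, by rw [hmin1]⟩, ?_⟩
              have : η u = η t1 := hc u ⟨le_of_lt (by rw [hmin1] at h'; exact h'),
                hu.2.trans (min_le_right _ _)⟩
              rw [this]
          · exact image_mono (Icc_subset_Icc_right (min_le_min (le_refl q) h12))
        rw [gg, gg, himg]

end

lemma summable_ggseq (hC : IsCompact C) (hrange : ∀ t, η t ∈ C) (t : ℝ) :
    Summable (fun n : ℕ => (1/2:ℝ)^n * gg η ((((Denumerable.eqv (ℚ × ℚ)).symm n).1 : ℚ) : ℝ)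
      ((((Denumerable.eqv (ℚ × ℚ)).symm n).2 : ℚ) : ℝ) t) := by
  apply Summable.of_nonneg_of_le
    (fun n => mul_nonneg (by positivity) (gg_nonneg hC hrange _ _ _))
    (fun n => mul_le_mul_of_nonneg_left (gg_le_diam hC hrange _ _ _) (by positivity))
  exact (summable_geometric_of_lt_one (by norm_num) (by norm_num)).mul_right _

lemma sF_mono (hC : IsCompact C) (hrange : ∀ t, η t ∈ C) : Monotone (sF η) := by
  intro t t' h
  exact Summable.tsum_le_tsum
    (fun n => mul_le_mul_of_nonneg_left (gg_mono hC hrange _ _ h) (by positivity))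
    (summable_ggseq hC hrange t) (summable_ggseq hC hrange t')

lemma sF_const (hC : IsCompact C) (hrange : ∀ t, η t ∈ C) {t1 t2 : ℝ} (h12 : t1 ≤ t2)
    (hc : ∀ u ∈ Icc t1 t2, η u = η t1) : sF η t1 = sF η t2 := by
  unfold sF
  congr 1
  funext n
  rw [gg_const hC hrange h12 hc]

lemma sF_zero (hC : IsCompact C) (hrange : ∀ t, η t ∈ C)
    (hneg : ∀ t ≤ (0:ℝ), η t = η 0) : sF η 0 = 0 := by
  unfold sF
  convert tsum_zero with n
  rcases lt_or_ge (min ((((Denumerable.eqv (ℚ × ℚ)).symm n).2 : ℚ) : ℝ) 0)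
    ((((Denumerable.eqv (ℚ × ℚ)).symm n).1 : ℚ) : ℝ) with h | h
  · rw [gg, Icc_eq_empty (not_le.2 h)]; simp
  · have : (η '' Icc ((((Denumerable.eqv (ℚ × ℚ)).symm n).1 : ℚ) : ℝ)
        (min ((((Denumerable.eqv (ℚ × ℚ)).symm n).2 : ℚ) : ℝ) 0)).Subsingleton := by
      rintro _ ⟨a, ha, rfl⟩ _ ⟨b, hb, rfl⟩
      rw [hneg a (ha.2.trans (min_le_right _ _)), hneg b (hb.2.trans (min_le_right _ _))]
    rw [gg, Metric.diam_subsingleton this]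
    simp


section Cont
variable {M : Type*} [MetricSpace M]
variable {η : ℝ → M} {C : Set M}

/-- one-sided increment bound for gg -/
lemma gg_incr (hC : IsCompact C) (hrange : ∀ t, η t ∈ C)
    {ε δ : ℝ} (hε : 0 ≤ ε)
    (hδ : ∀ a b : ℝ, |a - b| ≤ δ → dist (η a) (η b) ≤ ε)
    (p q : ℝ) {t t' : ℝ} (htt' : t ≤ t') (hd : t' - t ≤ δ) :
    gg η p q t' ≤ gg η p q t + 2 * ε := by
  have hδ0 : 0 ≤ δ := by linarith
  apply Metric.diam_le_of_forall_dist_le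
    (by linarith [gg_nonneg hC hrange p q t])
  rintro _ ⟨a, ha, rfl⟩ _ ⟨b, hb, rfl⟩
  have hm : min q t ≤ min q t' := min_le_min (le_refl q) htt'
  have hmd : min q t' - min q t ≤ δ := by
    rcases min_cases q t' with ⟨h1, _⟩ | ⟨h1, _⟩ <;> rcases min_cases q t with ⟨h2, _⟩ | ⟨h2, _⟩ <;>
      simp only [h1, h2] <;> linarith [min_le_left q t, min_le_right q t,
        min_le_left q t', min_le_right q t']
  rcases lt_or_ge (min q t) p with hp | hp
  · -- A empty : interval is short
    have : |a - b| ≤ δ := by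
      rw [abs_le]
      constructor <;> [skip; skip] <;>
        · have h1 := ha.1; have h2 := ha.2; have h3 := hb.1; have h4 := hb.2
          linarith
    calc dist (η a) (η b) ≤ ε := hδ a b this
      _ ≤ gg η p q t + 2*ε := by linarith [gg_nonneg hC hrange p q t]
  · set a0 := min a (min q t) with ha0
    set b0 := min b (min q t) with hb0
    have ha0m : a0 ∈ Icc p (min q t) := ⟨le_min ha.1 hp, min_le_right _ _⟩
    have hb0m : b0 ∈ Icc p (min q t) := ⟨le_min hb.1 hp, min_le_right _ _⟩
    have haa0 : |a - a0| ≤ δ := by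
      rw [abs_le]
      rcases min_cases a (min q t) with ⟨h1, h2⟩ | ⟨h1, h2⟩ <;>
        · rw [ha0, h1]
          constructor <;> linarith [ha.2, ha.1]
    have hbb0 : |b - b0| ≤ δ := by
      rw [abs_le]
      rcases min_cases b (min q t) with ⟨h1, h2⟩ | ⟨h1, h2⟩ <;>
        · rw [hb0, h1]
          constructor <;> linarith [hb.2, hb.1]
    calc dist (η a) (η b) ≤ dist (η a) (η a0) + dist (η a0) (η b0) + dist (η b0) (η b) :=
          dist_triangle4 _ _ _ _
      _ ≤ ε + gg η p q t + ε := by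
          gcongr
          · exact hδ a a0 haa0
          · exact Metric.dist_le_diam_of_mem (img_bounded hC hrange _)
              (mem_image_of_mem η ha0m) (mem_image_of_mem η hb0m)
          · rw [dist_comm]; exact hδ b b0 hbb0
      _ = gg η p q t + 2*ε := by ring

lemma gg_continuous (hC : IsCompact C) (hrange : ∀ t, η t ∈ C)
    (hηu : ∀ ε : ℝ, 0 < ε → ∃ δ > 0, ∀ a b : ℝ, |a - b| ≤ δ → dist (η a) (η b) ≤ ε)
    (p q : ℝ) : Continuous (fun t => gg η p q t) := by
  rw [Metric.continuous_iff]
  intro b ε hε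
  obtain ⟨δ, hδ0, hδ⟩ := hηu (ε/8) (by linarith)
  refine ⟨δ, hδ0, fun a hab => ?_⟩
  rw [Real.dist_eq, abs_lt] at hab
  have key : ∀ u v : ℝ, u ≤ v → v - u ≤ δ → |gg η p q v - gg η p q u| < ε := by
    intro u v huv hd
    rw [abs_lt]
    constructor
    · linarith [gg_mono hC hrange p q huv]
    · linarith [gg_incr hC hrange (by linarith : (0:ℝ) ≤ ε/8) hδ p q huv hd]
  rcases le_total a b with h | h
  · rw [Real.dist_eq, abs_sub_comm]
    exact key a b h (by linarith)
  · rw [Real.dist_eq]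
    exact key b a h (by linarith)

lemma sF_continuous (hC : IsCompact C) (hrange : ∀ t, η t ∈ C)
    (hηu : ∀ ε : ℝ, 0 < ε → ∃ δ > 0, ∀ a b : ℝ, |a - b| ≤ δ → dist (η a) (η b) ≤ ε) :
    Continuous (sF η) := by
  apply continuous_tsum
    (fun n => (continuous_const.mul (gg_continuous hC hrange hηu _ _)))
    ((summable_geometric_of_lt_one (r := (1/2:ℝ)) (by norm_num) (by norm_num)).mul_right
      (Metric.diam C))
  intro n t
  simp only [Pi.mul_apply]
  rw [Real.norm_eq_abs, abs_of_nonneg (mul_nonneg (by positivity) (gg_nonneg hC hrange _ _ _))]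
  exact mul_le_mul_of_nonneg_left (gg_le_diam hC hrange _ _ _) (by positivity)

/-- strict increase of sF across intervals where η is nonconstant -/
lemma sF_strict (hC : IsCompact C) (hrange : ∀ t, η t ∈ C)
    (hηu : ∀ ε : ℝ, 0 < ε → ∃ δ > 0, ∀ a b : ℝ, |a - b| ≤ δ → dist (η a) (η b) ≤ ε)
    {t1 t2 : ℝ} (h12 : t1 ≤ t2) {w : ℝ} (hw : w ∈ Ioc t1 t2) (hne : η w ≠ η t1) :
    sF η t1 < sF η t2 := by
  -- find z ∈ (t1, w) with η z ≠ η w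
  have hηc : Continuous η := by
    rw [Metric.continuous_iff]
    intro b ε hε
    obtain ⟨δ, hδ0, hδ⟩ := hηu (ε/2) (by linarith)
    exact ⟨δ, hδ0, fun a hab => lt_of_le_of_lt (hδ a b (le_of_lt (by rwa [Real.dist_eq] at hab))) (by linarith)⟩
  have hd0 : 0 < dist (η w) (η t1) := dist_pos.2 hne
  have hcont := Metric.continuous_iff.1 hηc t1 (dist (η w) (η t1) / 2) (by linarith)
  obtain ⟨δ0, hδ00, hδ0⟩ := hcont
  set z := t1 + min (δ0/2) ((w - t1)/2) with hz
  have hminpos : 0 < min (δ0/2) ((w - t1)/2) := lt_min (by linarith) (by linarith [hw.1])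
  have hzt1 : t1 < z := by rw [hz]; linarith
  have hzw : z < w := by
    rw [hz]
    have := min_le_right (δ0/2) ((w - t1)/2)
    linarith [hw.1]
  have hzd : dist (η z) (η t1) < dist (η w) (η t1) / 2 := by
    apply hδ0
    rw [Real.dist_eq, hz]
    rw [abs_of_pos (by linarith)]
    have := min_le_left (δ0/2) ((w - t1)/2)
    simp only [add_sub_cancel_left]
    linarith
  have hzwne : dist (η z) (η w) > 0 := by
    have := dist_triangle (η w) (η z) (η t1)
    rw [dist_comm (η w) (η z)] at this
    linarith
  -- rationals
  obtain ⟨p, hp1, hp2⟩ := exists_rat_btwn hzt1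
  obtain ⟨q, hq1, hq2⟩ := exists_rat_btwn (lt_add_one w)
  -- index
  set n := (Denumerable.eqv (ℚ × ℚ)) (p, q) with hn
  have hen : (Denumerable.eqv (ℚ × ℚ)).symm n = (p, q) := by
    rw [hn, Equiv.symm_apply_apply]
  have hg1 : gg η (p:ℝ) (q:ℝ) t1 = 0 := by
    rw [gg, Icc_eq_empty, image_empty, Metric.diam_empty]
    rw [min_eq_right (by linarith [hw.1] : t1 ≤ (q:ℝ))]
    exact not_le.2 hp1
  have hg2 : 0 < gg η (p:ℝ) (q:ℝ) t2 := by
    apply lt_of_lt_of_le hzwne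
    rw [gg]
    apply Metric.dist_le_diam_of_mem (img_bounded hC hrange _)
    · exact mem_image_of_mem η ⟨le_of_lt hp2,
        le_min (le_of_lt (hzw.trans hq1)) (le_of_lt (lt_of_lt_of_le hzw hw.2))⟩
    · exact mem_image_of_mem η ⟨by linarith, le_min (le_of_lt hq1) hw.2⟩
  apply Summable.tsum_lt_tsum_of_nonneg
    (fun m => mul_nonneg (by positivity) (gg_nonneg hC hrange _ _ _))
    (fun m => mul_le_mul_of_nonneg_left (gg_mono hC hrange _ _ h12) (by positivity))
    (i := n) ?_ (summable_ggseq hC hrange t2)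
  rw [hen]
  simp only []
  rw [hg1, mul_zero]
  exact mul_pos (by positivity) hg2

/-- converse: equality of sF forces constancy of η -/
lemma eta_const_of_sF_eq (hC : IsCompact C) (hrange : ∀ t, η t ∈ C)
    (hηu : ∀ ε : ℝ, 0 < ε → ∃ δ > 0, ∀ a b : ℝ, |a - b| ≤ δ → dist (η a) (η b) ≤ ε)
    {t1 t2 : ℝ} (h12 : t1 ≤ t2) (hs : sF η t1 = sF η t2) :
    ∀ u ∈ Icc t1 t2, η u = η t1 := by
  by_contra hcon
  push_neg at hcon
  obtain ⟨w, hw, hne⟩ := hcon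
  have hwt1 : t1 < w := by
    rcases eq_or_lt_of_le hw.1 with h | h
    · exact absurd (h ▸ rfl) hne
    · exact h
  exact absurd hs (ne_of_lt (sF_strict hC hrange hηu h12 ⟨hwt1, hw.2⟩ hne))

end Cont

end ArcAux4

section ArcAux5
variable {M : Type*} [MetricSpace M]

noncomputable def Rho' (sf : ℝ → ℝ) (w : ℝ) : ℝ :=
  sSup {t : ℝ | t ∈ Icc 0 1 ∧ sf t ≤ w * sf 1}

variable {η : ℝ → M} {sf : ℝ → ℝ}
  (hcont : Continuous sf)
  (hmono : Monotone sf)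
  (hzero : sf 0 = 0)
  (hpos : 0 < sf 1)
  (hconst : ∀ {t1 t2 : ℝ}, t1 ≤ t2 → sf t1 = sf t2 → ∀ u ∈ Icc t1 t2, η u = η t1)
  (hsconst : ∀ {t1 t2 : ℝ}, t1 ≤ t2 → (∀ u ∈ Icc t1 t2, η u = η t1) → sf t1 = sf t2)
  (hstar : ∀ a b : ℝ, a ≤ b → η a = η b → ∀ t ∈ Icc a b, η t = η a)
  (hηc : Continuous η)

section
include hcont hmono hzero hpos

lemma Rho_set_props {w : ℝ} (hw : 0 ≤ w) :
    Rho' sf w ∈ Icc (0:ℝ) 1 ∧ sf (Rho' sf w) ≤ w * sf 1 := by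
  have hne : ({t : ℝ | t ∈ Icc 0 1 ∧ sf t ≤ w * sf 1}).Nonempty :=
    ⟨0, ⟨le_refl 0, zero_le_one⟩, by rw [hzero]; exact mul_nonneg hw hpos.le⟩
  have hbdd : BddAbove {t : ℝ | t ∈ Icc 0 1 ∧ sf t ≤ w * sf 1} :=
    ⟨1, fun t ht => ht.1.2⟩
  have hcl : IsClosed {t : ℝ | t ∈ Icc 0 1 ∧ sf t ≤ w * sf 1} := by
    have : {t : ℝ | t ∈ Icc 0 1 ∧ sf t ≤ w * sf 1}
        = Icc 0 1 ∩ sf ⁻¹' (Iic (w * sf 1)) := rfl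
    rw [this]
    exact isClosed_Icc.inter (IsClosed.preimage hcont isClosed_Iic)
  have := hcl.csSup_mem hne hbdd
  exact ⟨this.1, this.2⟩

lemma Rho_mem {w : ℝ} (hw : 0 ≤ w) : Rho' sf w ∈ Icc (0:ℝ) 1 :=
  (Rho_set_props hcont hmono hzero hpos hw).1

lemma sF_Rho {w : ℝ} (hw : w ∈ Icc (0:ℝ) 1) : sf (Rho' sf w) = w * sf 1 := by
  refine le_antisymm (Rho_set_props hcont hmono hzero hpos hw.1).2 ?_
  have h1 : w * sf 1 ∈ Icc (sf 0) (sf 1) := by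
    rw [hzero]
    exact ⟨mul_nonneg hw.1 hpos.le, by nlinarith [hw.2, hpos]⟩
  obtain ⟨t, ht, hts⟩ := intermediate_value_Icc zero_le_one hcont.continuousOn h1
  have : t ≤ Rho' sf w := le_csSup ⟨1, fun u hu => hu.1.2⟩ ⟨ht, le_of_eq hts⟩
  calc w * sf 1 = sf t := hts.symm
    _ ≤ sf (Rho' sf w) := hmono this

lemma Rho_mono : MonotoneOn (Rho' sf) (Ici (0:ℝ)) := by
  intro w hw w' hw' hww'
  have hsub : {t : ℝ | t ∈ Icc 0 1 ∧ sf t ≤ w * sf 1}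
      ⊆ {t : ℝ | t ∈ Icc 0 1 ∧ sf t ≤ w' * sf 1} :=
    fun t ht => ⟨ht.1, ht.2.trans (mul_le_mul_of_nonneg_right hww' hpos.le)⟩
  exact csSup_le_csSup ⟨1, fun t ht => ht.1.2⟩
    ⟨0, ⟨le_refl 0, zero_le_one⟩, by rw [hzero]; exact mul_nonneg hw hpos.le⟩ hsub

lemma Rho_one : Rho' sf 1 = 1 := by
  apply le_antisymm (Rho_mem hcont hmono hzero hpos zero_le_one).2
  exact le_csSup ⟨1, fun t ht => ht.1.2⟩ ⟨⟨zero_le_one, le_refl 1⟩, by rw [one_mul]⟩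

include hsconst hstar in
lemma zeta_injOn : InjOn (fun w => η (Rho' sf w)) (Icc 0 1) := by
  have key : ∀ w ∈ Icc (0:ℝ) 1, ∀ w' ∈ Icc (0:ℝ) 1, w < w' →
      η (Rho' sf w) = η (Rho' sf w') → False := by
    intro w hw w' hw' hlt heq
    have hle : Rho' sf w ≤ Rho' sf w' :=
      Rho_mono hcont hmono hzero hpos hw.1 hw'.1 (le_of_lt hlt)
    have hc := hstar _ _ hle heq
    have hsf : sf (Rho' sf w) = sf (Rho' sf w') := hsconst hle hc
    rw [sF_Rho hcont hmono hzero hpos hw, sF_Rho hcont hmono hzero hpos hw'] at hsf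
    exact absurd (mul_right_cancel₀ (ne_of_gt hpos) hsf) (ne_of_lt hlt)
  intro w hw w' hw' heq
  by_contra hne
  rcases lt_or_gt_of_ne hne with h | h
  · exact key w hw w' hw' h heq
  · exact key w' hw' w hw h heq.symm

include hconst hηc in
lemma zeta_continuousOn : ContinuousOn (fun w => η (Rho' sf w)) (Icc 0 1) := by
  rw [Metric.continuousOn_iff]
  intro w0 hw0 ε hε
  set Lev := {t : ℝ | t ∈ Icc 0 1 ∧ sf t = w0 * sf 1} with hLev
  have hβmem := Rho_mem hcont hmono hzero hpos hw0.1
  have hβs := sF_Rho hcont hmono hzero hpos hw0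
  set β := Rho' sf w0 with hβ
  have hLne : Lev.Nonempty := ⟨β, hβmem, hβs⟩
  have hLcl : IsClosed Lev := by
    have : Lev = Icc 0 1 ∩ sf ⁻¹' {w0 * sf 1} := rfl
    rw [this]
    exact isClosed_Icc.inter (IsClosed.preimage hcont isClosed_singleton)
  have hLbdd : BddBelow Lev := ⟨0, fun t ht => ht.1.1⟩
  set α := sInf Lev with hα
  have hαmem : α ∈ Lev := hLcl.csInf_mem hLne hLbdd
  have hαβ : α ≤ β := csInf_le hLbdd ⟨hβmem, hβs⟩
  have hαβconst : ∀ u ∈ Icc α β, η u = η α :=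
    hconst hαβ (by rw [hαmem.2, hβs])
  have hηαβ : η β = η α := hαβconst β ⟨hαβ, le_refl β⟩
  obtain ⟨δ1, hδ10, hδ1⟩ := Metric.continuous_iff.1 hηc α ε hε
  obtain ⟨δ2, hδ20, hδ2⟩ := Metric.continuous_iff.1 hηc β ε hε
  -- LEFT
  have left : ∃ δL > 0, ∀ w ∈ Icc (0:ℝ) 1, w0 - δL < w → w < w0 →
      dist (η (Rho' sf w)) (η (Rho' sf w0)) < ε := by
    have hρleα : ∀ w ∈ Icc (0:ℝ) 1, w < w0 → Rho' sf w ≤ α := by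
      intro w hw hlt
      by_contra hcon
      push_neg at hcon
      have := hmono (le_of_lt hcon)
      rw [hαmem.2, sF_Rho hcont hmono hzero hpos hw] at this
      nlinarith
    rcases le_or_gt α 0 with hα0 | hα0
    · have hαeq : α = 0 := le_antisymm hα0 hαmem.1.1
      refine ⟨1, one_pos, fun w hw h1 h2 => ?_⟩
      have : Rho' sf w = α :=
        le_antisymm (hρleα w hw h2) (hαeq ▸ (Rho_mem hcont hmono hzero hpos hw.1).1)
      rw [this, ← hβ, hηαβ, dist_self]
      exact hε
    · set m := max (α - δ1/2) 0 with hm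
      have hmα : m < α := max_lt_iff.2 ⟨by linarith, hα0⟩
      have hsm : sf m < w0 * sf 1 := by
        rcases eq_or_lt_of_le (hmono (le_of_lt hmα)) with h | h
        · exfalso
          have hmem : m ∈ Lev := ⟨⟨le_max_right _ _, le_trans (le_of_lt hmα) hαmem.1.2⟩,
            by rw [h, hαmem.2]⟩
          exact absurd (csInf_le hLbdd hmem) (not_le.2 hmα)
        · rw [hαmem.2] at h; exact h
      refine ⟨(w0 * sf 1 - sf m) / sf 1, div_pos (by linarith) hpos, fun w hw h1 h2 => ?_⟩
      have hwL : sf m < w * sf 1 := by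
        have hmul := mul_lt_mul_of_pos_right h1 hpos
        rw [sub_mul, div_mul_cancel₀ _ (ne_of_gt hpos)] at hmul
        linarith
      have hρm : m < Rho' sf w := by
        by_contra hcon
        push_neg at hcon
        have := hmono hcon
        rw [sF_Rho hcont hmono hzero hpos hw] at this
        linarith
      have hd : dist (Rho' sf w) α < δ1 := by
        rw [Real.dist_eq, abs_lt]
        have := le_max_left (α - δ1/2) 0
        constructor
        · have := hρleα w hw h2; linarith
        · have := hρleα w hw h2; linarith
      calc dist (η (Rho' sf w)) (η (Rho' sf w0)) = dist (η (Rho' sf w)) (η α) := by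
            rw [← hβ, hηαβ]
        _ < ε := hδ1 _ hd
  -- RIGHT
  have right : ∃ δR > 0, ∀ w ∈ Icc (0:ℝ) 1, w0 < w → w < w0 + δR →
      dist (η (Rho' sf w)) (η (Rho' sf w0)) < ε := by
    have hρgeβ : ∀ w ∈ Icc (0:ℝ) 1, w0 < w → β ≤ Rho' sf w :=
      fun w hw hlt => Rho_mono hcont hmono hzero hpos hw0.1 hw.1 (le_of_lt hlt)
    rcases le_or_gt 1 β with hβ1 | hβ1
    · -- β = 1 : then w0 = 1, vacuous
      have hβeq : β = 1 := le_antisymm hβmem.2 hβ1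
      have hw01 : w0 = 1 := by
        have := hβs
        rw [hβeq] at this
        have := mul_right_cancel₀ (ne_of_gt hpos) (by rw [← this, one_mul] : (1:ℝ) * sf 1 = w0 * sf 1)
        exact this.symm
      refine ⟨1, one_pos, fun w hw h1 h2 => absurd (lt_of_lt_of_le (hw01 ▸ h1) hw.2) (lt_irrefl 1)⟩
    · set m := min (β + δ2/2) 1 with hm
      have hβm : β < m := lt_min_iff.2 ⟨by linarith, hβ1⟩
      have hsm : w0 * sf 1 < sf m := by
        rcases eq_or_lt_of_le (hmono (le_of_lt hβm)) with h | h
        · exfalso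
          have hmem : m ∈ {t : ℝ | t ∈ Icc 0 1 ∧ sf t ≤ w0 * sf 1} :=
            ⟨⟨le_trans hβmem.1 (le_of_lt hβm), min_le_right _ _⟩, by rw [← h, hβs]⟩
          exact absurd (le_csSup ⟨1, fun t ht => ht.1.2⟩ hmem) (not_le.2 hβm)
        · rw [hβs] at h; exact h
      refine ⟨(sf m - w0 * sf 1) / sf 1, div_pos (by linarith) hpos, fun w hw h1 h2 => ?_⟩
      have hwL : w * sf 1 < sf m := by
        have hmul := mul_lt_mul_of_pos_right h2 hpos
        rw [add_mul, div_mul_cancel₀ _ (ne_of_gt hpos)] at hmul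
        linarith
      have hρm : Rho' sf w < m := by
        by_contra hcon
        push_neg at hcon
        have := hmono hcon
        rw [sF_Rho hcont hmono hzero hpos hw] at this
        linarith
      have hd : dist (Rho' sf w) β < δ2 := by
        rw [Real.dist_eq, abs_lt]
        have := min_le_left (β + δ2/2) 1
        constructor
        · have := hρgeβ w hw h1; linarith
        · linarith
      calc dist (η (Rho' sf w)) (η (Rho' sf w0)) = dist (η (Rho' sf w)) (η β) := by rw [← hβ]
        _ < ε := hδ2 _ hd
  obtain ⟨δL, hδL0, hδL⟩ := left
  obtain ⟨δR, hδR0, hδR⟩ := right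
  refine ⟨min δL δR, lt_min hδL0 hδR0, fun w hw hdist => ?_⟩
  rcases lt_trichotomy w w0 with h | h | h
  · apply hδL w hw _ h
    rw [Real.dist_eq, abs_lt] at hdist
    have := min_le_left δL δR
    linarith [hdist.1, hdist.2]
  · rw [h, dist_self]; exact hε
  · apply hδR w hw h
    rw [Real.dist_eq, abs_lt] at hdist
    have := min_le_right δL δR
    linarith [hdist.1, hdist.2]

include hconst in
lemma zeta_zero : η (Rho' sf 0) = η 0 := by
  have h0 := Rho_mem hcont hmono hzero hpos (le_refl (0:ℝ))
  have hs0 : sf (Rho' sf 0) = 0 := by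
    have := sF_Rho hcont hmono hzero hpos (⟨le_refl 0, zero_le_one⟩ : (0:ℝ) ∈ Icc (0:ℝ) 1)
    rwa [zero_mul] at this
  have := hconst h0.1 (by rw [hzero, hs0]) (Rho' sf 0) ⟨h0.1, le_refl _⟩
  rw [this]

end
end ArcAux5

end Stmt1Arc


open Stmt1Arc in
/-- Any finite-or-infinite-length path between distinct points can be replaced by an injective
path (arc) with image contained in the original image and length at most the original length. -/
theorem stmt1 {M : Type*} [MetricSpace M] (x y : M) (hxy : x ≠ y)
    (γ : ℝ → M) (hγ : ContinuousOn γ (Set.Icc 0 1)) (h0 : γ 0 = x) (h1 : γ 1 = y) :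
    ∃ η : ℝ → M, ContinuousOn η (Set.Icc 0 1) ∧ η 0 = x ∧ η 1 = y ∧
      Set.InjOn η (Set.Icc 0 1) ∧ η '' Set.Icc 0 1 ⊆ γ '' Set.Icc 0 1 ∧
      pathLength η 0 1 ≤ pathLength γ 0 1 := by
  obtain ⟨K, hK, hmin⟩ := exists_minimal_KSet γ hγ
  obtain ⟨hKcl, hKI, h0K, h1K, hgapK⟩ := hK
  have hK' : K ∈ KSet γ := ⟨hKcl, hKI, h0K, h1K, hgapK⟩
  have hinj : ∀ s ∈ K, ∀ t ∈ K, s < t → γ s = γ t → K ∩ Ioo s t = ∅ :=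
    fun s hs t ht hst heq => minimal_inj γ hK' hmin hs ht hst heq
  set η : ℝ → M := fun t => γ (rK K t) with hηdef
  -- basic values
  have hr0 : rK K 0 = 0 := rK_of_mem hKcl hKI h0K h0K
  have hr1 : rK K 1 = 1 := rK_of_mem hKcl hKI h0K h1K
  have hη0 : η 0 = x := by rw [hηdef]; simp only [hr0, h0]
  have hη1 : η 1 = y := by rw [hηdef]; simp only [hr1, h1]
  -- compact range
  have hC : IsCompact (γ '' Icc 0 1) := isCompact_Icc.image_of_continuousOn hγ
  have hrange : ∀ t, η t ∈ γ '' Icc 0 1 := fun t =>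
    ⟨rK K t, ⟨rK_nonneg hKcl hKI h0K t, rK_le_one hKcl hKI h0K t⟩, rfl⟩
  -- uniform modulus
  have hηu : ∀ ε : ℝ, 0 < ε → ∃ δ > 0, ∀ a b : ℝ, |a - b| ≤ δ → dist (η a) (η b) ≤ ε := by
    intro ε hε
    have huc : UniformContinuousOn γ (Icc 0 1) :=
      isCompact_Icc.uniformContinuousOn_of_continuous hγ
    rw [Metric.uniformContinuousOn_iff] at huc
    obtain ⟨δ, hδ0, hδ⟩ := huc ε hε
    have hmod : ∀ p ∈ Icc (0:ℝ) 1, ∀ q ∈ Icc (0:ℝ) 1, |p - q| ≤ δ/2 → dist (γ p) (γ q) ≤ ε :=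
      fun p hp q hq hpq => le_of_lt (hδ p hp q hq (by rw [Real.dist_eq]; linarith))
    refine ⟨δ/2, by linarith, fun a b hab => ?_⟩
    rcases le_total b a with h | h
    · apply eta_dist_le hKcl hKI h0K h1K hgapK hmod h
      rw [abs_le] at hab; linarith [hab.1, hab.2]
    · rw [dist_comm]
      apply eta_dist_le hKcl hKI h0K h1K hgapK hmod h
      rw [abs_le] at hab; linarith [hab.1, hab.2]
  have hηc : Continuous η := eta_continuous hKcl hKI h0K h1K hgapK hγ
  have hstar : ∀ a b : ℝ, a ≤ b → η a = η b → ∀ t ∈ Icc a b, η t = η a :=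
    fun a b hab heq t ht => eta_const_of_eq hKcl hKI h0K h1K hgapK hinj hab heq t ht
  have hneg : ∀ t ≤ (0:ℝ), η t = η 0 := by
    intro t ht
    rcases eq_or_lt_of_le ht with h | h
    · rw [h]
    · rw [hηdef]; simp only [rK_of_neg hKcl hKI h0K h, hr0]
  set sf : ℝ → ℝ := sF η with hsfdef
  have hcont : Continuous sf := sF_continuous hC hrange hηu
  have hmono : Monotone sf := sF_mono hC hrange
  have hzero : sf 0 = 0 := sF_zero hC hrange hneg
  have hsconst : ∀ {t1 t2 : ℝ}, t1 ≤ t2 → (∀ u ∈ Icc t1 t2, η u = η t1) → sf t1 = sf t2 :=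
    fun h12 hc => sF_const hC hrange h12 hc
  have hconst : ∀ {t1 t2 : ℝ}, t1 ≤ t2 → sf t1 = sf t2 → ∀ u ∈ Icc t1 t2, η u = η t1 :=
    fun h12 hs u hu => eta_const_of_sF_eq hC hrange hηu h12 hs u hu
  have hpos : 0 < sf 1 := by
    rcases lt_or_ge 0 (sf 1) with h | h
    · exact h
    · exfalso
      have heq : sf 0 = sf 1 := le_antisymm (hmono zero_le_one) (by rw [hzero]; exact h)
      have := hconst zero_le_one heq 1 ⟨zero_le_one, le_refl 1⟩
      rw [hη0, hη1] at this
      exact hxy this.symm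
  refine ⟨fun w => η (Rho' sf w), ?_, ?_, ?_, ?_, ?_, ?_⟩
  · exact zeta_continuousOn hcont hmono hzero hpos hconst hηc
  · show η (Rho' sf 0) = x
    rw [zeta_zero hcont hmono hzero hpos hconst, hη0]
  · show η (Rho' sf 1) = y
    rw [Rho_one hcont hmono hzero hpos, hη1]
  · exact zeta_injOn hcont hmono hzero hpos hsconst hstar
  · rintro _ ⟨w, hw, rfl⟩
    exact hrange (Rho' sf w)
  · have hφmono : MonotoneOn (fun w => rK K (Rho' sf w)) (Icc 0 1) := fun a ha b hb hab =>
      rK_mono hKcl hKI h0K (Rho_mono hcont hmono hzero hpos ha.1 hb.1 hab)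
    have hφmaps : MapsTo (fun w => rK K (Rho' sf w)) (Icc 0 1) (Icc 0 1) := fun w hw =>
      ⟨rK_nonneg hKcl hKI h0K _, rK_le_one hKcl hKI h0K _⟩
    exact eVariationOn.comp_le_of_monotoneOn γ _ hφmono hφmaps
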